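/- Let T > 0 and c ≠ 0 be real numbers with c²T² > 1, and let D be the real 3×3 matrix with rows (−πT, π²T² − π²/c², 0), (1, πT, 0), (2π², 0, πT). Then the characteristic polynomial of D equals (X − πT)·(X² − (2π²T² − π²/c²)), and D has three distinct real eigenvalues, namely πT, πT·√(2 − 1/(c²T²)), and −πT·√(2 − 1/(c²T²)). -/

import Mathlib

open Polynomial

/-- The effective dispersion matrix `D(a=0,k,c)` of the Benjamin–Ono equation
(with `T = 2π/k`, `c²T² > 1`) has characteristic polynomial
`(X − πT)(X² − (2π²T² − π²/c²))` and three distinct real eigenvalues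
`πT` and `±πT√(2 − 1/(c²T²))`. -/
theorem stmt_13 (T c : ℝ) (hT : 0 < T) (hc : c ≠ 0) (hcT : 1 < c ^ 2 * T ^ 2)
    (D : Matrix (Fin 3) (Fin 3) ℝ)
    (hD : D = !![-(Real.pi * T), Real.pi ^ 2 * T ^ 2 - Real.pi ^ 2 / c ^ 2, 0;
                 1, Real.pi * T, 0;
                 2 * Real.pi ^ 2, 0, Real.pi * T]) :
    D.charpoly
        = (X - C (Real.pi * T))
            * (X ^ 2 - C (2 * Real.pi ^ 2 * T ^ 2 - Real.pi ^ 2 / c ^ 2))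
      ∧ (Real.pi * T ≠ Real.pi * T * Real.sqrt (2 - 1 / (c ^ 2 * T ^ 2))
          ∧ Real.pi * T ≠ -(Real.pi * T * Real.sqrt (2 - 1 / (c ^ 2 * T ^ 2)))
          ∧ Real.pi * T * Real.sqrt (2 - 1 / (c ^ 2 * T ^ 2))
              ≠ -(Real.pi * T * Real.sqrt (2 - 1 / (c ^ 2 * T ^ 2))))
      ∧ D.charpoly.IsRoot (Real.pi * T)
      ∧ D.charpoly.IsRoot (Real.pi * T * Real.sqrt (2 - 1 / (c ^ 2 * T ^ 2)))
      ∧ D.charpoly.IsRoot (-(Real.pi * T * Real.sqrt (2 - 1 / (c ^ 2 * T ^ 2)))) := by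
  have hcT0 : (0:ℝ) < c ^ 2 * T ^ 2 := lt_trans one_pos hcT
  have hinv : 1 / (c ^ 2 * T ^ 2) < 1 := by
    rw [div_lt_one hcT0]; exact hcT
  have harg : (1:ℝ) < 2 - 1 / (c ^ 2 * T ^ 2) := by linarith
  have harg0 : (0:ℝ) ≤ 2 - 1 / (c ^ 2 * T ^ 2) := by linarith
  have hs : 1 < Real.sqrt (2 - 1 / (c ^ 2 * T ^ 2)) := by
    have := Real.sqrt_lt_sqrt (le_of_lt one_pos) harg
    rwa [Real.sqrt_one] at this
  have hs0 : 0 < Real.sqrt (2 - 1 / (c ^ 2 * T ^ 2)) := lt_trans one_pos hs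
  have hpT : 0 < Real.pi * T := mul_pos Real.pi_pos hT
  have hsq : Real.sqrt (2 - 1 / (c ^ 2 * T ^ 2)) ^ 2 = 2 - 1 / (c ^ 2 * T ^ 2) :=
    Real.sq_sqrt harg0
  have hcp : D.charpoly
        = (X - C (Real.pi * T))
            * (X ^ 2 - C (2 * Real.pi ^ 2 * T ^ 2 - Real.pi ^ 2 / c ^ 2)) := by
    subst hD
    rw [Matrix.charpoly, Matrix.det_fin_three]
    simp [Matrix.charmatrix_apply, Matrix.one_apply, map_ofNat]
    ring
  have key : Real.pi * T * Real.sqrt (2 - 1 / (c ^ 2 * T ^ 2)) ^ 2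
        * (Real.pi * T) = 2 * Real.pi ^ 2 * T ^ 2 - Real.pi ^ 2 / c ^ 2 := by
    rw [hsq]
    field_simp
  refine ⟨hcp, ⟨?_, ?_, ?_⟩, ?_, ?_, ?_⟩
  · nlinarith
  · nlinarith
  · nlinarith
  · simp [hcp]
  · simp only [hcp, IsRoot, eval_mul, eval_sub, eval_pow, eval_X, eval_C]
    apply mul_eq_zero_of_right
    rw [mul_pow, hsq]
    field_simp
    ring
  · simp only [hcp, IsRoot, eval_mul, eval_sub, eval_pow, eval_X, eval_C]
    apply mul_eq_zero_of_right
    rw [neg_pow, mul_pow, hsq]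
    field_simp
    ring
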